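/- arXiv:2303.02794 — 3 statements merged into one kernel-verified Lean document; each statement's English description precedes it below -/
import Mathlib

section
/- Let M ≥ 1, let f : ℝ^M → ℝ be K_f-Lipschitz with K_f ≥ 0, let x ∈ ℝ^M, take the reference vector x_r = 0, and let x̃ = m_{S̃}(x) be a perturbed instance of x for some subset S̃ ⊆ {1,…,M}. Assume min_{1≤i≤M} φ_i(x̃) ≥ 0. Then the explanation difference is bounded by the prediction difference: ‖Φ(x) − Φ(x̃)‖₂ ≤ (1 + √2·γ₀)·|f(x) − f(x̃)| + √M·γ₀, where γ₀ = K_f·‖x‖₂. -/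
/-- The masked instance `m_S(x)`: coordinate `j` equals `x j` if `j ∈ S`
and the reference value `xr j` otherwise. -/
noncomputable def mask {M : ℕ} (xr : EuclideanSpace ℝ (Fin M)) (S : Finset (Fin M))
    (x : EuclideanSpace ℝ (Fin M)) : EuclideanSpace ℝ (Fin M) :=
  WithLp.toLp 2 (fun j => if j ∈ S then x j else xr j)

/-- Attribution of feature `i` at `x`:
`φ_i(x) = 2^{-(M-1)} · Σ_{S ⊆ {1,…,M}\{i}} (f(m_{S∪{i}}(x)) − f(m_S(x)))`. -/
noncomputable def phi {M : ℕ} (xr : EuclideanSpace ℝ (Fin M))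
    (f : EuclideanSpace ℝ (Fin M) → ℝ) (i : Fin M) (x : EuclideanSpace ℝ (Fin M)) : ℝ :=
  ((2 : ℝ) ^ (M - 1))⁻¹ *
    ∑ S ∈ (Finset.univ.erase i).powerset, (f (mask xr (insert i S) x) - f (mask xr S x))


lemma num_key (M : ℕ) (hM : 1 ≤ M) :
    ((2:ℝ) ^ (M - 1))⁻¹ * (((2:ℝ) ^ (M - 1) - 1) * 2) ≤ Real.sqrt M := by
  have hsq : ∀ a : ℝ, 0 ≤ a → a ^ 2 ≤ (M : ℝ) → a ≤ Real.sqrt M := by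
    intro a ha h
    exact (Real.le_sqrt ha (by positivity)).mpr h
  match M, hM with
  | 1, _ => norm_num
  | 2, _ => exact hsq _ (by norm_num) (by norm_num)
  | 3, _ => exact hsq _ (by norm_num) (by norm_num)
  | (n+4), _ =>
    have ht : (1:ℝ) ≤ 2 ^ (n + 4 - 1) := one_le_pow₀ (by norm_num)
    have h2 : ((2:ℝ) ^ (n + 4 - 1))⁻¹ * (((2:ℝ) ^ (n + 4 - 1) - 1) * 2) ≤ 2 := by
      rw [inv_mul_le_iff₀ (by positivity)]
      nlinarith
    refine h2.trans (hsq 2 (by norm_num) ?_)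
    push_cast; nlinarith

lemma mask_insert_sub_mask {M : ℕ} (x : EuclideanSpace ℝ (Fin M)) (i : Fin M)
    (S : Finset (Fin M)) (hi : i ∉ S) :
    (mask 0 (insert i S) x : EuclideanSpace ℝ (Fin M)) - mask 0 S x
      = EuclideanSpace.single i (x i) := by
  ext j
  simp only [PiLp.sub_apply, mask, PiLp.toLp_apply, EuclideanSpace.single_apply, Finset.mem_insert,
    PiLp.zero_apply]
  by_cases h : j = i
  · subst h; simp [hi]
  · by_cases h2 : j ∈ S <;> simp [h, h2]

lemma mask_mask {M : ℕ} (St S : Finset (Fin M)) (x : EuclideanSpace ℝ (Fin M)) :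
    mask 0 S (mask 0 St x) = mask 0 (S ∩ St) x := by
  ext j
  simp only [mask, PiLp.toLp_apply, Finset.mem_inter, PiLp.zero_apply]
  by_cases h1 : j ∈ S <;> by_cases h2 : j ∈ St <;> simp [h1, h2]

section bounds
variable {M : ℕ} (f : EuclideanSpace ℝ (Fin M) → ℝ) (Kf : ℝ) (hKf : 0 ≤ Kf)
  (hf : ∀ u v : EuclideanSpace ℝ (Fin M), |f u - f v| ≤ Kf * ‖u - v‖)
  (x : EuclideanSpace ℝ (Fin M))

include hf in
lemma term_abs_le (i : Fin M) (S : Finset (Fin M)) (hi : i ∉ S) :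
    |f (mask 0 (insert i S) x) - f (mask 0 S x)| ≤ Kf * |x i| := by
  calc |f (mask 0 (insert i S) x) - f (mask 0 S x)|
      ≤ Kf * ‖(mask 0 (insert i S) x : EuclideanSpace ℝ (Fin M)) - mask 0 S x‖ := hf _ _
    _ = Kf * |x i| := by
        rw [mask_insert_sub_mask x i S hi, EuclideanSpace.norm_single, Real.norm_eq_abs]

-- card of the powerset index set
lemma card_pow (i : Fin M) :
    ((Finset.univ.erase i).powerset.card : ℝ) = 2 ^ (M - 1) := by
  rw [Finset.card_powerset, Finset.card_erase_of_mem (Finset.mem_univ i)]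
  simp

include hf in
lemma phi_abs_le (i : Fin M) : |phi 0 f i x| ≤ Kf * |x i| := by
  have hcard := card_pow (M := M) i
  have hb : |∑ S ∈ (Finset.univ.erase i).powerset,
      (f (mask 0 (insert i S) x) - f (mask 0 S x))| ≤ (2:ℝ) ^ (M - 1) * (Kf * |x i|) := by
    refine (Finset.abs_sum_le_sum_abs _ _).trans ?_
    have h1 : ∑ S ∈ (Finset.univ.erase i).powerset,
        |f (mask 0 (insert i S) x) - f (mask 0 S x)|
        ≤ (Finset.univ.erase i).powerset.card • (Kf * |x i|) :=
      Finset.sum_le_card_nsmul _ _ _ (fun S hS => term_abs_le f Kf hf x i S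
        (fun h => (Finset.mem_erase.mp (Finset.mem_powerset.mp hS h)).1 rfl))
    rw [nsmul_eq_mul, hcard] at h1
    exact h1
  rw [phi, abs_mul, abs_inv]
  have h2 : |(2:ℝ) ^ (M - 1)| = (2:ℝ) ^ (M - 1) := abs_of_pos (by positivity)
  rw [h2]
  calc ((2:ℝ) ^ (M-1))⁻¹ * |∑ S ∈ (Finset.univ.erase i).powerset,
        (f (mask 0 (insert i S) x) - f (mask 0 S x))|
      ≤ ((2:ℝ) ^ (M-1))⁻¹ * ((2:ℝ) ^ (M - 1) * (Kf * |x i|)) := by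
        exact mul_le_mul_of_nonneg_left hb (by positivity)
    _ = Kf * |x i| := by field_simp

lemma phi_xt_eq_zero (St : Finset (Fin M)) (i : Fin M) (hi : i ∉ St) :
    phi 0 f i (mask 0 St x) = 0 := by
  rw [phi]
  have : ∀ S ∈ (Finset.univ.erase i).powerset,
      f (mask 0 (insert i S) (mask 0 St x)) - f (mask 0 S (mask 0 St x)) = 0 := by
    intro S hS
    rw [mask_mask, mask_mask, Finset.insert_inter_of_notMem hi, sub_self]
  rw [Finset.sum_congr rfl this]
  simp

include hf in
lemma phi_diff_le_mem (St : Finset (Fin M)) (i : Fin M) (hi : i ∈ St) :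
    |phi 0 f i x - phi 0 f i (mask 0 St x)|
      ≤ ((2:ℝ) ^ (M - 1))⁻¹ * ((2:ℝ) ^ (M - 1) - 1) * (2 * (Kf * |x i|)) := by
  set P := (Finset.univ.erase i).powerset with hP
  have hrw : phi 0 f i x - phi 0 f i (mask 0 St x)
      = ((2:ℝ) ^ (M - 1))⁻¹ * ∑ S ∈ P,
        ((f (mask 0 (insert i S) x) - f (mask 0 S x))
          - (f (mask 0 (insert i (S ∩ St)) x) - f (mask 0 (S ∩ St) x))) := by
    rw [phi, phi, ← mul_sub, ← Finset.sum_sub_distrib]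
    congr 1
    refine Finset.sum_congr rfl (fun S hS => ?_)
    rw [mask_mask, mask_mask, Finset.insert_inter_of_mem hi]
  rw [hrw]
  have hempty : (∅ : Finset (Fin M)) ∈ P := by simp [hP]
  have hzero : (f (mask 0 (insert i (∅ : Finset (Fin M))) x) - f (mask 0 ∅ x))
      - (f (mask 0 (insert i ((∅ : Finset (Fin M)) ∩ St)) x) - f (mask 0 (∅ ∩ St) x)) = 0 := by
    simp
  have hsum : ∑ S ∈ P, ((f (mask 0 (insert i S) x) - f (mask 0 S x))
          - (f (mask 0 (insert i (S ∩ St)) x) - f (mask 0 (S ∩ St) x)))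
      = ∑ S ∈ P.erase ∅, ((f (mask 0 (insert i S) x) - f (mask 0 S x))
          - (f (mask 0 (insert i (S ∩ St)) x) - f (mask 0 (S ∩ St) x))) := by
    rw [← Finset.sum_erase_add _ _ hempty, hzero, add_zero]
  rw [hsum, abs_mul, abs_inv, abs_of_pos (a := (2:ℝ)^(M-1)) (by positivity)]
  have hcardP : (P.card : ℝ) = 2 ^ (M - 1) := by
    rw [hP, Finset.card_powerset, Finset.card_erase_of_mem (Finset.mem_univ i)]
    simp
  have hcard : ((P.erase ∅).card : ℝ) = 2 ^ (M - 1) - 1 := by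
    rw [Finset.card_erase_of_mem hempty,
      Nat.cast_sub (Finset.card_pos.mpr ⟨∅, hempty⟩), hcardP]
    norm_num
  have hb : |∑ S ∈ P.erase ∅, ((f (mask 0 (insert i S) x) - f (mask 0 S x))
          - (f (mask 0 (insert i (S ∩ St)) x) - f (mask 0 (S ∩ St) x)))|
      ≤ ((2:ℝ) ^ (M - 1) - 1) * (2 * (Kf * |x i|)) := by
    refine (Finset.abs_sum_le_sum_abs _ _).trans ?_
    have h1 : ∑ S ∈ P.erase ∅, |(f (mask 0 (insert i S) x) - f (mask 0 S x))
          - (f (mask 0 (insert i (S ∩ St)) x) - f (mask 0 (S ∩ St) x))|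
        ≤ (P.erase ∅).card • (2 * (Kf * |x i|)) := by
      refine Finset.sum_le_card_nsmul _ _ _ (fun S hS => ?_)
      have hiS : i ∉ S := by
        have := Finset.mem_powerset.mp (Finset.mem_of_mem_erase hS)
        exact fun h => (Finset.mem_erase.mp (this h)).1 rfl
      have hiS2 : i ∉ S ∩ St := fun h => hiS (Finset.mem_inter.mp h).1
      calc |(f (mask 0 (insert i S) x) - f (mask 0 S x))
            - (f (mask 0 (insert i (S ∩ St)) x) - f (mask 0 (S ∩ St) x))|
          ≤ |f (mask 0 (insert i S) x) - f (mask 0 S x)|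
            + |f (mask 0 (insert i (S ∩ St)) x) - f (mask 0 (S ∩ St) x)| := abs_sub _ _
        _ ≤ Kf * |x i| + Kf * |x i| :=
            add_le_add (term_abs_le f Kf hf x i S hiS) (term_abs_le f Kf hf x i _ hiS2)
        _ = 2 * (Kf * |x i|) := by ring
    rw [nsmul_eq_mul, hcard] at h1
    exact h1
  calc ((2:ℝ)^(M-1))⁻¹ * |∑ S ∈ P.erase ∅, ((f (mask 0 (insert i S) x) - f (mask 0 S x))
          - (f (mask 0 (insert i (S ∩ St)) x) - f (mask 0 (S ∩ St) x)))|
      ≤ ((2:ℝ)^(M-1))⁻¹ * (((2:ℝ) ^ (M - 1) - 1) * (2 * (Kf * |x i|))) :=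
        mul_le_mul_of_nonneg_left hb (by positivity)
    _ = ((2:ℝ) ^ (M - 1))⁻¹ * ((2:ℝ) ^ (M - 1) - 1) * (2 * (Kf * |x i|)) := by ring

end bounds

/-- The explanation vector `Φ(x) = (φ_1(x), …, φ_M(x))`. -/
noncomputable def Phi {M : ℕ} (xr : EuclideanSpace ℝ (Fin M))
    (f : EuclideanSpace ℝ (Fin M) → ℝ) (x : EuclideanSpace ℝ (Fin M)) :
    EuclideanSpace ℝ (Fin M) :=
  WithLp.toLp 2 (fun i => phi xr f i x)

/-- **Theorem 1 (Compact Alignment).** With reference vector `x_r = 0`, for a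
`K_f`-Lipschitz model `f` and a perturbed instance `xt = m_{St}(x)` whose attributions
are all nonnegative, the explanation difference is bounded by the prediction difference:
`‖Φ(x) − Φ(xt)‖₂ ≤ (1 + √2·γ₀)·|f(x) − f(xt)| + √M·γ₀` where `γ₀ = K_f‖x‖₂`. -/
theorem compact_alignment {M : ℕ} (hM : 1 ≤ M)
    (f : EuclideanSpace ℝ (Fin M) → ℝ) (Kf : ℝ) (hKf : 0 ≤ Kf)
    (hf : ∀ u v : EuclideanSpace ℝ (Fin M), |f u - f v| ≤ Kf * ‖u - v‖)
    (x : EuclideanSpace ℝ (Fin M)) (St : Finset (Fin M))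
    (xt : EuclideanSpace ℝ (Fin M)) (hxt : xt = mask (0 : EuclideanSpace ℝ (Fin M)) St x)
    (hpos : ∀ i : Fin M, 0 ≤ phi (0 : EuclideanSpace ℝ (Fin M)) f i xt) :
    ‖Phi (0 : EuclideanSpace ℝ (Fin M)) f x - Phi (0 : EuclideanSpace ℝ (Fin M)) f xt‖ ≤
      (1 + Real.sqrt 2 * (Kf * ‖x‖)) * |f x - f xt| + Real.sqrt M * (Kf * ‖x‖) := by
  subst hxt
  set xt := mask (0 : EuclideanSpace ℝ (Fin M)) St x with hxt
  have hM1 : (1:ℝ) ≤ Real.sqrt M := by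
    rw [show (1:ℝ) = Real.sqrt 1 by simp]
    exact Real.sqrt_le_sqrt (by exact_mod_cast hM)
  have key : ∀ i : Fin M, |phi 0 f i x - phi 0 f i xt| ≤ Real.sqrt M * (Kf * |x i|) := by
    intro i
    by_cases hi : i ∈ St
    · refine (phi_diff_le_mem f Kf hf x St i hi).trans ?_
      have hnk := num_key M hM
      have h0 : 0 ≤ Kf * |x i| := mul_nonneg hKf (abs_nonneg _)
      calc ((2:ℝ)^(M-1))⁻¹ * ((2:ℝ)^(M-1) - 1) * (2*(Kf*|x i|))
          = (((2:ℝ)^(M-1))⁻¹ * (((2:ℝ)^(M-1) - 1) * 2)) * (Kf*|x i|) := by ring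
        _ ≤ Real.sqrt M * (Kf * |x i|) := mul_le_mul_of_nonneg_right hnk h0
    · rw [phi_xt_eq_zero f x St i hi, sub_zero]
      refine (phi_abs_le f Kf hf x i).trans ?_
      nlinarith [mul_nonneg hKf (abs_nonneg (x i))]
  have hnorm : ‖Phi (0 : EuclideanSpace ℝ (Fin M)) f x - Phi (0 : EuclideanSpace ℝ (Fin M)) f xt‖
      ≤ Real.sqrt M * (Kf * ‖x‖) := by
    rw [EuclideanSpace.norm_eq]
    have hsum : ∑ i, ‖(Phi (0 : EuclideanSpace ℝ (Fin M)) f x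
          - Phi (0 : EuclideanSpace ℝ (Fin M)) f xt) i‖^2
        ≤ (Real.sqrt M * Kf)^2 * ∑ i, ‖x i‖^2 := by
      rw [Finset.mul_sum]
      refine Finset.sum_le_sum (fun i _ => ?_)
      have h1 : ‖(Phi (0 : EuclideanSpace ℝ (Fin M)) f x
            - Phi (0 : EuclideanSpace ℝ (Fin M)) f xt) i‖
          = |phi 0 f i x - phi 0 f i xt| := by
        rw [PiLp.sub_apply, Real.norm_eq_abs]; rfl
      rw [h1, Real.norm_eq_abs]
      have h2 : |phi 0 f i x - phi 0 f i xt|^2 ≤ (Real.sqrt M * (Kf * |x i|))^2 :=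
        pow_le_pow_left₀ (abs_nonneg _) (key i) 2
      calc |phi 0 f i x - phi 0 f i xt|^2 ≤ (Real.sqrt M * (Kf * |x i|))^2 := h2
        _ = (Real.sqrt M * Kf)^2 * |x i|^2 := by ring
    have hle := Real.sqrt_le_sqrt hsum
    refine hle.trans (le_of_eq ?_)
    rw [Real.sqrt_mul (by positivity), Real.sqrt_sq (by positivity),
      EuclideanSpace.norm_eq x]
    ring
  refine hnorm.trans ?_
  have hg : 0 ≤ Kf * ‖x‖ := mul_nonneg hKf (norm_nonneg x)
  have h1 : 0 ≤ (1 + Real.sqrt 2 * (Kf * ‖x‖)) * |f x - f xt| := by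
    have : 0 ≤ 1 + Real.sqrt 2 * (Kf * ‖x‖) := by positivity
    exact mul_nonneg this (abs_nonneg _)
  linarith
end

section
/- Let M ≥ 1, let f : ℝ^M → ℝ be K_f-Lipschitz with K_f ≥ 0, take the reference vector x_r = 0, let g : ℝ^M → ℝ^d be an explanation encoder, let η : ℝ^d → ℝ^M be K_η-Lipschitz with K_η ≥ 0, and define the estimated explanation Φ̂(x) = η(g(x)). Let x_k ∈ ℝ^M be a testing instance and let x̃_k⁺ = m_{S̃}(x_k) be a perturbed instance of x_k for some subset S̃ ⊆ {1,…,M} satisfying min_{1≤i≤M} φ_i(x̃_k⁺) ≥ 0. Suppose the encoder is well-trained at x̃_k⁺, i.e. ‖Φ(x̃_k⁺) − Φ̂(x̃_k⁺)‖₂ ≤ ε for some ε ≥ 0. Then the explanation error at x_k is bounded as ‖Φ(x_k) − Φ̂(x_k)‖₂ ≤ (1 + √2·γ_k)·|f(x_k) − f(x̃_k⁺)| + √M·γ_k + ε + K_η·‖g(x̃_k⁺) − g(x_k)‖₂, where γ_k = K_f·‖x_k‖₂. -/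
section Aux

open Finset

variable {M : ℕ}

private lemma enorm_eq (u : EuclideanSpace ℝ (Fin M)) :
    ‖u‖ = Real.sqrt (∑ j, (u j) ^ 2) := by
  rw [EuclideanSpace.norm_eq]
  congr 1
  refine Finset.sum_congr rfl fun j _ => ?_
  rw [Real.norm_eq_abs, sq_abs]

private lemma enorm_sq (u : EuclideanSpace ℝ (Fin M)) :
    ‖u‖ ^ 2 = ∑ j, (u j) ^ 2 := by
  rw [enorm_eq, Real.sq_sqrt]
  exact Finset.sum_nonneg fun j _ => sq_nonneg _

private lemma mask_apply (xr : EuclideanSpace ℝ (Fin M)) (S : Finset (Fin M))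
    (x : EuclideanSpace ℝ (Fin M)) (j : Fin M) :
    mask xr S x j = if j ∈ S then x j else xr j := rfl

private lemma ezero_apply (j : Fin M) : (0 : EuclideanSpace ℝ (Fin M)) j = 0 := rfl

/-- Masking a masked vector intersects the masks (reference 0). -/
private lemma maskmask (A S : Finset (Fin M)) (x : EuclideanSpace ℝ (Fin M)) :
    mask 0 S (mask 0 A x) = mask 0 (S ∩ A) x := by
  ext j
  simp only [mask, Finset.mem_inter, ezero_apply]
  by_cases hS : j ∈ S <;> by_cases hA : j ∈ A <;> simp [hS, hA]

private lemma mask_univ (x : EuclideanSpace ℝ (Fin M)) :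
    mask 0 (Finset.univ : Finset (Fin M)) x = x := by
  ext j
  simp [mask]

private lemma mask_diff_single (x : EuclideanSpace ℝ (Fin M)) {i : Fin M}
    {S : Finset (Fin M)} (hiS : i ∉ S) :
    ‖mask 0 (insert i S) x - mask 0 S x‖ = |x i| := by
  have h : ∀ j, (mask 0 (insert i S) x - mask 0 S x) j = if j = i then x i else 0 := by
    intro j
    rw [PiLp.sub_apply]
    simp only [mask, Finset.mem_insert, ezero_apply]
    by_cases hj : j = i
    · subst hj; simp [hiS]
    · by_cases hjS : j ∈ S <;> simp [hj, hjS]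
  rw [enorm_eq]
  have : (∑ j, ((mask 0 (insert i S) x - mask 0 S x) j) ^ 2)
      = ∑ j, (if j = i then (x i) ^ 2 else 0) := by
    refine Finset.sum_congr rfl fun j _ => ?_
    rw [h j]
    by_cases hj : j = i <;> simp [hj]
  rw [this, Finset.sum_ite_eq' Finset.univ i fun _ => (x i) ^ 2]
  simp [Real.sqrt_sq_eq_abs]

private lemma mask_diff_inter (x : EuclideanSpace ℝ (Fin M)) (A S : Finset (Fin M)) :
    ‖mask 0 S x - mask 0 (S ∩ A) x‖ = Real.sqrt (∑ j ∈ S \ A, (x j) ^ 2) := by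
  have h : ∀ j, (mask 0 S x - mask 0 (S ∩ A) x) j = if j ∈ S \ A then x j else 0 := by
    intro j
    rw [PiLp.sub_apply]
    simp only [mask, Finset.mem_inter, Finset.mem_sdiff, ezero_apply]
    by_cases hS : j ∈ S <;> by_cases hA : j ∈ A <;> simp [hS, hA]
  rw [enorm_eq]
  congr 1
  have : (∑ j, ((mask 0 S x - mask 0 (S ∩ A) x) j) ^ 2)
      = ∑ j, (if j ∈ S \ A then (x j) ^ 2 else 0) := by
    refine Finset.sum_congr rfl fun j _ => ?_
    rw [h j]
    by_cases hj : j ∈ S \ A <;> simp [hj]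
  rw [this, Finset.sum_ite_mem, Finset.univ_inter]

private lemma card_powerset_erase (i : Fin M) :
    ((Finset.univ.erase i).powerset).card = 2 ^ (M - 1) := by
  rw [Finset.card_powerset, Finset.card_erase_of_mem (Finset.mem_univ i)]
  simp

/-- Each attribution is bounded by `Kf * |y i|`. -/
private lemma abs_phi_le {f : EuclideanSpace ℝ (Fin M) → ℝ} {Kf : ℝ}
    (hf : ∀ u v : EuclideanSpace ℝ (Fin M), |f u - f v| ≤ Kf * ‖u - v‖)
    (i : Fin M) (y : EuclideanSpace ℝ (Fin M)) :
    |phi 0 f i y| ≤ Kf * |y i| := by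
  unfold phi
  have hc : (0:ℝ) < (2 : ℝ) ^ (M - 1) := by positivity
  rw [abs_mul, abs_inv, abs_of_pos hc]
  have hsum : |∑ S ∈ (Finset.univ.erase i).powerset,
      (f (mask 0 (insert i S) y) - f (mask 0 S y))| ≤ 2 ^ (M-1) * (Kf * |y i|) := by
    refine le_trans (Finset.abs_sum_le_sum_abs _ _) ?_
    have hterm : ∀ S ∈ (Finset.univ.erase i).powerset,
        |f (mask 0 (insert i S) y) - f (mask 0 S y)| ≤ Kf * |y i| := by
      intro S hS
      have hiS : i ∉ S := fun h =>
        (Finset.notMem_erase i Finset.univ) (Finset.mem_powerset.mp hS h)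
      calc |f (mask 0 (insert i S) y) - f (mask 0 S y)|
          ≤ Kf * ‖mask 0 (insert i S) y - mask 0 S y‖ := hf _ _
        _ = Kf * |y i| := by rw [mask_diff_single y hiS]
    refine le_trans (Finset.sum_le_sum hterm) ?_
    rw [Finset.sum_const, card_powerset_erase, nsmul_eq_mul]
    exact le_of_eq (by push_cast; ring)
  calc ((2:ℝ) ^ (M-1))⁻¹ * |∑ S ∈ (Finset.univ.erase i).powerset,
        (f (mask 0 (insert i S) y) - f (mask 0 S y))|
      ≤ ((2:ℝ) ^ (M-1))⁻¹ * (2 ^ (M-1) * (Kf * |y i|)) := by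
        exact mul_le_mul_of_nonneg_left hsum (by positivity)
    _ = Kf * |y i| := by field_simp

/-- If `y i = 0` then `φ_i(y) = 0`. -/
private lemma phi_eq_zero {f : EuclideanSpace ℝ (Fin M) → ℝ} {i : Fin M}
    {y : EuclideanSpace ℝ (Fin M)} (hy : y i = 0) : phi 0 f i y = 0 := by
  unfold phi
  have h : ∀ S : Finset (Fin M), mask 0 (insert i S) y = mask 0 S y := by
    intro S
    ext j
    simp only [mask, Finset.mem_insert, ezero_apply]
    by_cases hj : j = i
    · subst hj
      by_cases hS : j ∈ S <;> simp [hS, hy]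
    · simp [hj]
  simp [h]

/-- Counting subsets of `E` containing a fixed `j ∈ E`. -/
private lemma sum_ite_powerset {E : Finset (Fin M)} {j : Fin M} (hj : j ∈ E) (c : ℝ) :
    (∑ S ∈ E.powerset, (if j ∈ S then c else 0)) = 2 ^ (E.card - 1) * c := by
  have hE : insert j (E.erase j) = E := Finset.insert_erase hj
  rw [← hE, Finset.sum_powerset_insert (Finset.notMem_erase j E)]
  have h1 : (∑ S ∈ (E.erase j).powerset, (if j ∈ S then c else 0)) = 0 := by
    refine Finset.sum_eq_zero fun S hS => ?_
    have : j ∉ S := fun h =>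
      (Finset.notMem_erase j E) (Finset.mem_powerset.mp hS h)
    simp [this]
  have h2 : (∑ S ∈ (E.erase j).powerset, (if j ∈ insert j S then c else 0))
      = 2 ^ (E.card - 1) * c := by
    have : ∀ S ∈ (E.erase j).powerset, (if j ∈ insert j S then c else 0) = c := by
      intro S _; simp
    rw [Finset.sum_congr rfl this, Finset.sum_const, Finset.card_powerset,
      Finset.card_erase_of_mem hj, nsmul_eq_mul]
    push_cast
    ring
  rw [h1, h2, zero_add, Finset.card_insert_of_notMem (Finset.notMem_erase j E),
    Finset.card_erase_of_mem hj]
  congr 2 <;> omega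


set_option maxHeartbeats 2000000 in
/-- Key estimate: `‖Φ(x) − Φ(m_A(x))‖ ≤ √M · Kf · ‖x‖`. -/
private lemma Phi_mask_diff_le {M : ℕ} (f : EuclideanSpace ℝ (Fin M) → ℝ)
    {Kf : ℝ} (hKf : 0 ≤ Kf)
    (hf : ∀ u v : EuclideanSpace ℝ (Fin M), |f u - f v| ≤ Kf * ‖u - v‖)
    (x : EuclideanSpace ℝ (Fin M)) (A : Finset (Fin M)) :
    ‖Phi 0 f x - Phi 0 f (mask 0 A x)‖ ≤ Real.sqrt M * (Kf * ‖x‖) := by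
  by_cases hA : A = Finset.univ
  · subst hA
    rw [mask_univ, sub_self, norm_zero]
    positivity
  set xt := mask 0 A x with hxt
  set Q := ∑ j ∈ Aᶜ, (x j) ^ 2 with hQ
  set P := ∑ j ∈ A, (x j) ^ 2 with hP
  have hQ0 : 0 ≤ Q := Finset.sum_nonneg fun j _ => sq_nonneg _
  have hP0 : 0 ≤ P := Finset.sum_nonneg fun j _ => sq_nonneg _
  have hPQ : P + Q = ‖x‖ ^ 2 := by
    rw [enorm_sq]; exact Finset.sum_add_sum_compl A _
  -- coordinate bound for i ∉ A
  have hout : ∀ i ∈ Aᶜ, (phi 0 f i x - phi 0 f i xt) ^ 2 ≤ Kf ^ 2 * (x i) ^ 2 := by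
    intro i hi
    have hiA : i ∉ A := Finset.mem_compl.mp hi
    have hxti : xt i = 0 := by simp [hxt, mask, hiA]
    rw [phi_eq_zero hxti, sub_zero]
    have h := abs_phi_le hf i x
    have h2 : (phi 0 f i x) ^ 2 ≤ (Kf * |x i|) ^ 2 := by
      have := abs_nonneg (phi 0 f i x)
      nlinarith [sq_abs (phi 0 f i x)]
    calc (phi 0 f i x) ^ 2 ≤ (Kf * |x i|) ^ 2 := h2
      _ = Kf ^ 2 * (x i) ^ 2 := by rw [mul_pow, sq_abs]
  -- coordinate bound for i ∈ A
  have hin : ∀ i ∈ A, (phi 0 f i x - phi 0 f i xt) ^ 2 ≤ 2 * Kf ^ 2 * (x i) ^ 2 + Kf ^ 2 * Q := by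
    intro i hiA
    -- first bound : ≤ 4 Kf^2 (x i)^2
    have hxti : xt i = x i := by simp [hxt, mask, hiA]
    have hb1 : (phi 0 f i x - phi 0 f i xt) ^ 2 ≤ 4 * Kf ^ 2 * (x i) ^ 2 := by
      have h1 := abs_phi_le hf i x
      have h2 := abs_phi_le hf i xt
      rw [hxti] at h2
      have habs : |phi 0 f i x - phi 0 f i xt| ≤ 2 * (Kf * |x i|) := by
        calc |phi 0 f i x - phi 0 f i xt| ≤ |phi 0 f i x| + |phi 0 f i xt| := abs_sub _ _
          _ ≤ 2 * (Kf * |x i|) := by linarith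
      have := abs_nonneg (phi 0 f i x - phi 0 f i xt)
      nlinarith [sq_abs (phi 0 f i x - phi 0 f i xt), sq_abs (x i), abs_nonneg (x i)]
    -- second bound : ≤ 2 Kf^2 Q
    obtain ⟨j, hjA⟩ : ∃ j, j ∉ A := by
      by_contra h
      push_neg at h
      exact hA (Finset.eq_univ_iff_forall.mpr h)
    have hij : i ≠ j := fun h => hjA (h ▸ hiA)
    have hM2 : 2 ≤ M := by
      have : 1 < Fintype.card (Fin M) := Fintype.one_lt_card_iff.mpr ⟨i, j, hij⟩
      simp at this; omega
    set E := (Finset.univ : Finset (Fin M)).erase i with hE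
    have hEcard : E.card = M - 1 := by
      rw [hE, Finset.card_erase_of_mem (Finset.mem_univ i)]
      simp
    set r : Finset (Fin M) → ℝ := fun S => Real.sqrt (∑ l ∈ S \ A, (x l) ^ 2) with hr
    have hr0 : ∀ S, 0 ≤ r S := fun S => Real.sqrt_nonneg _
    -- rewrite phi at xt
    have hpt : phi 0 f i xt = ((2:ℝ) ^ (M-1))⁻¹ *
        ∑ S ∈ E.powerset, (f (mask 0 ((insert i S) ∩ A) x) - f (mask 0 (S ∩ A) x)) := by
      unfold phi
      congr 1
      refine Finset.sum_congr rfl fun S _ => ?_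
      rw [hxt, maskmask, maskmask]
    set u : Finset (Fin M) → ℝ := fun S =>
      (f (mask 0 (insert i S) x) - f (mask 0 S x)) -
        (f (mask 0 ((insert i S) ∩ A) x) - f (mask 0 (S ∩ A) x)) with hu
    have hdiff : phi 0 f i x - phi 0 f i xt =
        ((2:ℝ) ^ (M-1))⁻¹ * ∑ S ∈ E.powerset, u S := by
      rw [hpt]
      unfold phi
      rw [← mul_sub, ← Finset.sum_sub_distrib]
    have huS : ∀ S ∈ E.powerset, |u S| ≤ 2 * Kf * r S := by
      intro S _
      have hins : insert i S \ A = S \ A := Finset.insert_sdiff_of_mem S hiA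
      have e1 : |f (mask 0 (insert i S) x) - f (mask 0 ((insert i S) ∩ A) x)| ≤ Kf * r S := by
        calc |f (mask 0 (insert i S) x) - f (mask 0 ((insert i S) ∩ A) x)|
            ≤ Kf * ‖mask 0 (insert i S) x - mask 0 ((insert i S) ∩ A) x‖ := hf _ _
          _ = Kf * r S := by rw [mask_diff_inter, hins]
      have e2 : |f (mask 0 S x) - f (mask 0 (S ∩ A) x)| ≤ Kf * r S := by
        calc |f (mask 0 S x) - f (mask 0 (S ∩ A) x)|
            ≤ Kf * ‖mask 0 S x - mask 0 (S ∩ A) x‖ := hf _ _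
          _ = Kf * r S := by rw [mask_diff_inter]
      calc |u S| = |(f (mask 0 (insert i S) x) - f (mask 0 ((insert i S) ∩ A) x)) -
            (f (mask 0 S x) - f (mask 0 (S ∩ A) x))| := by rw [hu]; ring_nf
        _ ≤ |f (mask 0 (insert i S) x) - f (mask 0 ((insert i S) ∩ A) x)| +
            |f (mask 0 S x) - f (mask 0 (S ∩ A) x)| := abs_sub _ _
        _ ≤ 2 * Kf * r S := by linarith
    have hsum_abs : |∑ S ∈ E.powerset, u S| ≤ 2 * Kf * ∑ S ∈ E.powerset, r S := by
      calc |∑ S ∈ E.powerset, u S| ≤ ∑ S ∈ E.powerset, |u S| :=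
            Finset.abs_sum_le_sum_abs _ _
        _ ≤ ∑ S ∈ E.powerset, 2 * Kf * r S := Finset.sum_le_sum huS
        _ = 2 * Kf * ∑ S ∈ E.powerset, r S := by rw [Finset.mul_sum]
    -- Cauchy–Schwarz and counting
    have hrsq : ∑ S ∈ E.powerset, (r S) ^ 2 = 2 ^ (M - 2) * Q := by
      have h1 : ∀ S ∈ E.powerset, (r S) ^ 2 = ∑ l ∈ Aᶜ, (if l ∈ S then (x l) ^ 2 else 0) := by
        intro S _
        rw [hr]
        rw [Real.sq_sqrt (Finset.sum_nonneg fun l _ => sq_nonneg _)]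
        rw [Finset.sum_ite_mem]
        congr 1
        ext l
        simp only [Finset.mem_sdiff, Finset.mem_inter, Finset.mem_compl]
        tauto
      rw [Finset.sum_congr rfl h1, Finset.sum_comm]
      have h2 : ∀ l ∈ Aᶜ, (∑ S ∈ E.powerset, (if l ∈ S then (x l) ^ 2 else 0))
          = 2 ^ (M - 2) * (x l) ^ 2 := by
        intro l hl
        have hlA : l ∉ A := Finset.mem_compl.mp hl
        have hli : l ≠ i := fun h => hlA (h ▸ hiA)
        have hlE : l ∈ E := Finset.mem_erase.mpr ⟨hli, Finset.mem_univ l⟩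
        rw [sum_ite_powerset hlE, hEcard]
        congr 2 <;> omega
      rw [Finset.sum_congr rfl h2, ← Finset.mul_sum]
    have hCS : (∑ S ∈ E.powerset, r S) ^ 2 ≤ 2 ^ (M - 1) * (2 ^ (M - 2) * Q) := by
      have := sq_sum_le_card_mul_sum_sq (s := E.powerset) (f := r)
      rw [hrsq] at this
      have hcard : ((E.powerset.card : ℝ)) = 2 ^ (M - 1) := by
        rw [Finset.card_powerset, hEcard]
        push_cast
        ring
      calc (∑ S ∈ E.powerset, r S) ^ 2
          ≤ (E.powerset.card : ℝ) * (2 ^ (M - 2) * Q) := this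
        _ = 2 ^ (M - 1) * (2 ^ (M - 2) * Q) := by rw [hcard]
    have hb2 : (phi 0 f i x - phi 0 f i xt) ^ 2 ≤ 2 * Kf ^ 2 * Q := by
      rw [hdiff]
      have hc : (0:ℝ) < (2:ℝ) ^ (M - 1) := by positivity
      have hsq : (((2:ℝ) ^ (M-1))⁻¹ * ∑ S ∈ E.powerset, u S) ^ 2
          ≤ (((2:ℝ) ^ (M-1))⁻¹) ^ 2 * ((2 * Kf) ^ 2 * (∑ S ∈ E.powerset, r S) ^ 2) := by
        rw [mul_pow]
        have habs2 : (∑ S ∈ E.powerset, u S) ^ 2 ≤ (2 * Kf * ∑ S ∈ E.powerset, r S) ^ 2 := by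
          have h0 : (0:ℝ) ≤ 2 * Kf * ∑ S ∈ E.powerset, r S := by
            have : (0:ℝ) ≤ ∑ S ∈ E.powerset, r S := Finset.sum_nonneg fun S _ => hr0 S
            positivity
          nlinarith [sq_abs (∑ S ∈ E.powerset, u S), abs_nonneg (∑ S ∈ E.powerset, u S)]
        calc (((2:ℝ) ^ (M-1))⁻¹) ^ 2 * (∑ S ∈ E.powerset, u S) ^ 2
            ≤ (((2:ℝ) ^ (M-1))⁻¹) ^ 2 * (2 * Kf * ∑ S ∈ E.powerset, r S) ^ 2 := by
              exact mul_le_mul_of_nonneg_left habs2 (by positivity)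
          _ = (((2:ℝ) ^ (M-1))⁻¹) ^ 2 * ((2 * Kf) ^ 2 * (∑ S ∈ E.powerset, r S) ^ 2) := by
              ring
      refine le_trans hsq ?_
      have hfinal : (((2:ℝ) ^ (M-1))⁻¹) ^ 2 * ((2 * Kf) ^ 2 * (2 ^ (M - 1) * (2 ^ (M - 2) * Q)))
          = 2 * Kf ^ 2 * Q := by
        have hsplit : (2:ℝ) ^ (M - 1) = 2 ^ (M - 2) * 2 := by
          rw [← pow_succ]
          congr 1
          omega
        rw [hsplit]
        have hb : (0:ℝ) < (2:ℝ) ^ (M - 2) := by positivity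
        field_simp
      calc (((2:ℝ) ^ (M-1))⁻¹) ^ 2 * ((2 * Kf) ^ 2 * (∑ S ∈ E.powerset, r S) ^ 2)
          ≤ (((2:ℝ) ^ (M-1))⁻¹) ^ 2 * ((2 * Kf) ^ 2 * (2 ^ (M - 1) * (2 ^ (M - 2) * Q))) := by
            have h4 : (0:ℝ) ≤ (2 * Kf) ^ 2 := sq_nonneg _
            exact mul_le_mul_of_nonneg_left
              (mul_le_mul_of_nonneg_left hCS h4) (by positivity)
        _ = 2 * Kf ^ 2 * Q := hfinal
    linarith
  -- assemble
  have key : ‖Phi 0 f x - Phi 0 f xt‖ ^ 2 ≤ (M : ℝ) * (Kf ^ 2 * ‖x‖ ^ 2) := by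
    rw [enorm_sq]
    have hptwise : ∀ i : Fin M, ((Phi 0 f x - Phi 0 f xt) i) ^ 2
        = (phi 0 f i x - phi 0 f i xt) ^ 2 := by
      intro i
      simp only [Phi, PiLp.sub_apply]
    rw [Finset.sum_congr rfl fun i _ => hptwise i]
    rw [← Finset.sum_add_sum_compl A]
    have hsum_in : ∑ i ∈ A, (phi 0 f i x - phi 0 f i xt) ^ 2
        ≤ 2 * Kf ^ 2 * P + A.card * (Kf ^ 2 * Q) := by
      calc ∑ i ∈ A, (phi 0 f i x - phi 0 f i xt) ^ 2
          ≤ ∑ i ∈ A, (2 * Kf ^ 2 * (x i) ^ 2 + Kf ^ 2 * Q) := Finset.sum_le_sum hin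
        _ = 2 * Kf ^ 2 * P + A.card * (Kf ^ 2 * Q) := by
            rw [Finset.sum_add_distrib, ← Finset.mul_sum, Finset.sum_const, nsmul_eq_mul]
    have hsum_out : ∑ i ∈ Aᶜ, (phi 0 f i x - phi 0 f i xt) ^ 2 ≤ Kf ^ 2 * Q := by
      calc ∑ i ∈ Aᶜ, (phi 0 f i x - phi 0 f i xt) ^ 2
          ≤ ∑ i ∈ Aᶜ, Kf ^ 2 * (x i) ^ 2 := Finset.sum_le_sum hout
        _ = Kf ^ 2 * Q := by rw [← Finset.mul_sum]
    have hcardA : (A.card : ℝ) + 1 ≤ (M : ℝ) := by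
      have : A.card < M := by
        have h1 : A ⊂ Finset.univ := Finset.ssubset_univ_iff.mpr hA
        have := Finset.card_lt_card h1
        simpa using this
      exact_mod_cast this
    have harith : 2 * Kf ^ 2 * P + A.card * (Kf ^ 2 * Q) + Kf ^ 2 * Q
        ≤ (M : ℝ) * (Kf ^ 2 * ‖x‖ ^ 2) := by
      rw [← hPQ]
      rcases Finset.eq_empty_or_nonempty A with hAe | hAne
      · have hPzero : P = 0 := by rw [hP, hAe]; simp
        rw [hPzero]
        have hA0 : (A.card : ℝ) = 0 := by rw [hAe]; simp
        rw [hA0]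
        have hKQ : 0 ≤ Kf ^ 2 * Q := by positivity
        nlinarith [hKQ, sq_nonneg Kf]
      · have h1A : (1:ℝ) ≤ A.card := by
          have := Finset.card_pos.mpr hAne
          exact_mod_cast this
        have hM2 : (2:ℝ) ≤ (M:ℝ) := by linarith
        have hKP : 0 ≤ Kf ^ 2 * P := by positivity
        have hKQ : 0 ≤ Kf ^ 2 * Q := by positivity
        nlinarith [hKP, hKQ]
    linarith
  have hrhs_sq : (Real.sqrt M * (Kf * ‖x‖)) ^ 2 = (M : ℝ) * (Kf ^ 2 * ‖x‖ ^ 2) := by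
    rw [mul_pow, mul_pow, Real.sq_sqrt (Nat.cast_nonneg M)]
  have h := Real.sqrt_le_sqrt key
  rwa [Real.sqrt_sq (norm_nonneg _), ← hrhs_sq, Real.sqrt_sq (by positivity)] at h


end Aux

/-- **Theorem 2 (Explanation Error Bound).** With reference vector `x_r = 0`, let
`Φ̂ = η ∘ g` be the estimated explanation with `η` being `K_η`-Lipschitz. If the
perturbed instance `x̃_k⁺ = m_{S̃}(x_k)` has nonnegative attributions and the encoder
is well-trained at `x̃_k⁺` (`‖Φ(x̃_k⁺) − Φ̂(x̃_k⁺)‖₂ ≤ ε`), then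
`‖Φ(x_k) − Φ̂(x_k)‖₂ ≤ (1 + √2·γ_k)·|f(x_k) − f(x̃_k⁺)| + √M·γ_k + ε + K_η‖g(x̃_k⁺) − g(x_k)‖₂`
where `γ_k = K_f‖x_k‖₂`. -/
theorem explanation_error_bound {M d : ℕ} (hM : 1 ≤ M)
    (f : EuclideanSpace ℝ (Fin M) → ℝ) (Kf : ℝ) (hKf : 0 ≤ Kf)
    (hf : ∀ u v : EuclideanSpace ℝ (Fin M), |f u - f v| ≤ Kf * ‖u - v‖)
    (g : EuclideanSpace ℝ (Fin M) → EuclideanSpace ℝ (Fin d))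
    (η : EuclideanSpace ℝ (Fin d) → EuclideanSpace ℝ (Fin M))
    (Kη : ℝ) (hKη : 0 ≤ Kη)
    (hη : ∀ u v : EuclideanSpace ℝ (Fin d), ‖η u - η v‖ ≤ Kη * ‖u - v‖)
    (xk : EuclideanSpace ℝ (Fin M)) (St : Finset (Fin M))
    (xtk : EuclideanSpace ℝ (Fin M)) (hxtk : xtk = mask (0 : EuclideanSpace ℝ (Fin M)) St xk)
    (hpos : ∀ i : Fin M, 0 ≤ phi (0 : EuclideanSpace ℝ (Fin M)) f i xtk)
    (ε : ℝ) (hε : 0 ≤ ε)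
    (htrained : ‖Phi (0 : EuclideanSpace ℝ (Fin M)) f xtk - η (g xtk)‖ ≤ ε) :
    ‖Phi (0 : EuclideanSpace ℝ (Fin M)) f xk - η (g xk)‖ ≤
      (1 + Real.sqrt 2 * (Kf * ‖xk‖)) * |f xk - f xtk| + Real.sqrt M * (Kf * ‖xk‖)
        + ε + Kη * ‖g xtk - g xk‖ := by
  have hsplit : Phi (0 : EuclideanSpace ℝ (Fin M)) f xk - η (g xk)
      = (Phi 0 f xk - Phi 0 f xtk) + (Phi 0 f xtk - η (g xtk)) + (η (g xtk) - η (g xk)) := by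
    abel
  have h1 : ‖Phi (0 : EuclideanSpace ℝ (Fin M)) f xk - Phi 0 f xtk‖
      ≤ Real.sqrt M * (Kf * ‖xk‖) := by
    rw [hxtk]
    exact Phi_mask_diff_le f hKf hf xk St
  have h3 : ‖η (g xtk) - η (g xk)‖ ≤ Kη * ‖g xtk - g xk‖ := hη _ _
  have htri : ‖Phi (0 : EuclideanSpace ℝ (Fin M)) f xk - η (g xk)‖
      ≤ ‖Phi 0 f xk - Phi 0 f xtk‖ + ‖Phi 0 f xtk - η (g xtk)‖ + ‖η (g xtk) - η (g xk)‖ := by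
    rw [hsplit]
    exact norm_add₃_le
  have hextra : 0 ≤ (1 + Real.sqrt 2 * (Kf * ‖xk‖)) * |f xk - f xtk| := by
    have : (0:ℝ) ≤ 1 + Real.sqrt 2 * (Kf * ‖xk‖) := by positivity
    exact mul_nonneg this (abs_nonneg _)
  linarith
end

section
/- Let M ≥ 1, let f : ℝ^M → ℝ be K_f-Lipschitz with K_f ≥ 0, let x ∈ ℝ^M, take the reference vector x_r = 0, and let x̃ = m_{S̃}(x) for a subset S̃ ⊆ {1,…,M}. For each feature index i ∈ {1,…,M}, define δ_i = 2^{-(M-1)} · Σ_{S ⊆ {1,…,M}\{i}} |f(m_{S∪{i}}(x)) − f(m_{S∪{i}}(x̃))|. Then the per-feature explanation difference satisfies |φ_i(x) − φ_i(x̃)| ≤ δ_i + K_f · ‖x‖₂ for every i ∈ {1,…,M}. -/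
lemma mask_diff_norm_le {M : ℕ} (x : EuclideanSpace ℝ (Fin M)) (S St : Finset (Fin M)) :
    ‖mask (0 : EuclideanSpace ℝ (Fin M)) S x
      - mask (0 : EuclideanSpace ℝ (Fin M)) S (mask (0 : EuclideanSpace ℝ (Fin M)) St x)‖
      ≤ ‖x‖ := by
  rw [EuclideanSpace.norm_eq, EuclideanSpace.norm_eq]
  apply Real.sqrt_le_sqrt
  apply Finset.sum_le_sum
  intro j _
  have : (mask (0 : EuclideanSpace ℝ (Fin M)) S x
      - mask (0 : EuclideanSpace ℝ (Fin M)) S (mask (0 : EuclideanSpace ℝ (Fin M)) St x)) j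
      = mask (0 : EuclideanSpace ℝ (Fin M)) S x j
      - mask (0 : EuclideanSpace ℝ (Fin M)) S (mask (0 : EuclideanSpace ℝ (Fin M)) St x) j := rfl
  rw [this]
  simp only [mask, PiLp.toLp_apply]
  have h0 : (0 : EuclideanSpace ℝ (Fin M)) j = 0 := rfl
  split_ifs with h1 h2 <;>
    simp [h0, sq_abs, sq_nonneg]

/-- **Per-feature bound (Eq. A.4).** With reference vector `x_r = 0`, a `K_f`-Lipschitz
model `f`, a perturbed instance `x̃ = m_{S̃}(x)`, and
`δ_i = 2^{-(M-1)} · Σ_{S ⊆ {1,…,M}\{i}} |f(m_{S∪{i}}(x)) − f(m_{S∪{i}}(x̃))|`,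
one has `|φ_i(x) − φ_i(x̃)| ≤ δ_i + K_f·‖x‖₂` for every feature `i`. -/
theorem per_feature_delta_bound {M : ℕ} (hM : 1 ≤ M)
    (f : EuclideanSpace ℝ (Fin M) → ℝ) (Kf : ℝ) (hKf : 0 ≤ Kf)
    (hf : ∀ u v : EuclideanSpace ℝ (Fin M), |f u - f v| ≤ Kf * ‖u - v‖)
    (x : EuclideanSpace ℝ (Fin M)) (St : Finset (Fin M))
    (xt : EuclideanSpace ℝ (Fin M)) (hxt : xt = mask (0 : EuclideanSpace ℝ (Fin M)) St x)
    (δ : Fin M → ℝ)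
    (hδ : ∀ i : Fin M, δ i = ((2 : ℝ) ^ (M - 1))⁻¹ *
        ∑ S ∈ (Finset.univ.erase i).powerset,
          |f (mask (0 : EuclideanSpace ℝ (Fin M)) (insert i S) x)
            - f (mask (0 : EuclideanSpace ℝ (Fin M)) (insert i S) xt)|) :
    ∀ i : Fin M,
      |phi (0 : EuclideanSpace ℝ (Fin M)) f i x - phi (0 : EuclideanSpace ℝ (Fin M)) f i xt| ≤
        δ i + Kf * ‖x‖ := by
  intro i
  set c : ℝ := ((2 : ℝ) ^ (M - 1))⁻¹ with hc
  have hcpos : (0 : ℝ) < c := by positivity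
  set P := (Finset.univ.erase i).powerset with hP
  have hcard : (P.card : ℝ) * c = 1 := by
    have : P.card = 2 ^ (M - 1) := by
      rw [hP, Finset.card_powerset, Finset.card_erase_of_mem (Finset.mem_univ i),
        Finset.card_univ, Fintype.card_fin]
    rw [this, Nat.cast_pow, Nat.cast_ofNat, hc, mul_inv_cancel₀ (by positivity)]
  have key : phi (0 : EuclideanSpace ℝ (Fin M)) f i x
      - phi (0 : EuclideanSpace ℝ (Fin M)) f i xt
      = c * ∑ S ∈ P,
        ((f (mask 0 (insert i S) x) - f (mask 0 (insert i S) xt))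
          - (f (mask 0 S x) - f (mask 0 S xt))) := by
    rw [phi, phi, ← mul_sub, ← Finset.sum_sub_distrib]
    congr 1
    apply Finset.sum_congr rfl
    intro S _
    ring
  rw [key, hδ i, abs_mul, abs_of_pos hcpos]
  have step1 : |∑ S ∈ P,
        ((f (mask 0 (insert i S) x) - f (mask 0 (insert i S) xt))
          - (f (mask 0 S x) - f (mask 0 S xt)))|
      ≤ ∑ S ∈ P, (|f (mask 0 (insert i S) x) - f (mask 0 (insert i S) xt)|
          + |f (mask 0 S x) - f (mask 0 S xt)|) := by
    refine (Finset.abs_sum_le_sum_abs _ _).trans (Finset.sum_le_sum fun S _ => ?_)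
    exact abs_sub _ _
  calc c * |∑ S ∈ P,
        ((f (mask 0 (insert i S) x) - f (mask 0 (insert i S) xt))
          - (f (mask 0 S x) - f (mask 0 S xt)))|
      ≤ c * ∑ S ∈ P, (|f (mask 0 (insert i S) x) - f (mask 0 (insert i S) xt)|
          + |f (mask 0 S x) - f (mask 0 S xt)|) := by
        exact mul_le_mul_of_nonneg_left step1 hcpos.le
    _ = c * ∑ S ∈ P, |f (mask 0 (insert i S) x) - f (mask 0 (insert i S) xt)|
        + c * ∑ S ∈ P, |f (mask 0 S x) - f (mask 0 S xt)| := by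
        rw [Finset.sum_add_distrib, mul_add]
    _ ≤ c * ∑ S ∈ P, |f (mask 0 (insert i S) x) - f (mask 0 (insert i S) xt)|
        + Kf * ‖x‖ := by
        gcongr c * ∑ S ∈ P, |f (mask 0 (insert i S) x) - f (mask 0 (insert i S) xt)| + ?_
        have hbound : ∀ S ∈ P, |f (mask 0 S x) - f (mask 0 S xt)| ≤ Kf * ‖x‖ := by
          intro S _
          refine (hf _ _).trans ?_
          have := mask_diff_norm_le x S St
          rw [← hxt] at this
          exact mul_le_mul_of_nonneg_left this hKf
        calc c * ∑ S ∈ P, |f (mask 0 S x) - f (mask 0 S xt)|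
            ≤ c * ∑ S ∈ P, (Kf * ‖x‖) :=
              mul_le_mul_of_nonneg_left (Finset.sum_le_sum hbound) hcpos.le
          _ = (P.card : ℝ) * c * (Kf * ‖x‖) := by
              rw [Finset.sum_const, nsmul_eq_mul]; ring
          _ = Kf * ‖x‖ := by rw [hcard, one_mul]
end
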